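/- Let M1 and M2 be matroids on a common ground set U, let I be a common independent set, and let C be a simple directed cycle in the exchange graph G(I) for which no arc of G(I) is a shortcut arc. Then I ⊖ C (the set obtained from I by adding the non-I elements on C and removing the I elements on C) is a common independent set of M1 and M2. -/

import Mathlib

def IsDicycle {V : Type*} (A : V → V → Prop) {n : ℕ} (c : ZMod n → V) : Prop :=
  0 < n ∧ ∀ i : ZMod n, A (c i) (c (i + 1))

def cycleArcs {V : Type*} {n : ℕ} (c : ZMod n → V) : Set (V × V) :=
  {p | ∃ i : ZMod n, p = (c i, c (i + 1))}

def IsShortcutArc {V : Type*} (A : V → V → Prop) {n : ℕ} (c : ZMod n → V)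
    (u v : V) : Prop :=
  A u v ∧ (u, v) ∉ cycleArcs c ∧
    ∃ (m : ℕ) (c' : ZMod m → V), IsDicycle A c' ∧ Function.Injective c' ∧
      cycleArcs c' ⊆ cycleArcs c ∪ {(u, v)} ∧ cycleArcs c' ≠ cycleArcs c

/-- The fundamental circuit of an element `u ∈ cl(I) \ I` with respect to an
independent set `I`: the set of `v ∈ I + u` such that `I + u - v` is independent. -/
def fundC {α : Type*} (M : Matroid α) (I : Set α) (u : α) : Set α :=
  {v ∈ insert u I | M.Indep (insert u I \ {v})}

/-- The exchange graph of a common independent set `I` of `M₁, M₂`: an arc `v → u`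
for `v ∈ I`, `u ∉ I` with `u ∈ cl₁(I)` and `v` in the `M₁`-fundamental circuit of
`u`, and an arc `u → v` for `u ∉ I`, `v ∈ I` with `u ∈ cl₂(I)` and `v` in the
`M₂`-fundamental circuit of `u`. -/
def exchArc {α : Type*} (M₁ M₂ : Matroid α) (I : Set α) (x y : α) : Prop :=
  (x ∈ I ∧ y ∈ M₁.E \ I ∧ y ∈ M₁.closure I ∧ x ∈ fundC M₁ I y) ∨
  (x ∈ M₁.E \ I ∧ y ∈ I ∧ x ∈ M₂.closure I ∧ y ∈ fundC M₂ I x)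

lemma mem_fundC_iff {α : Type*} {M : Matroid α} {I : Set α} {u v : α} :
    v ∈ fundC M I u ↔ v ∈ insert u I ∧ M.Indep (insert u I \ {v}) := Iff.rfl

/-- If there is an arc `c p → c q` of `A` between vertices of a simple dicycle `c`
that is not an arc of the cycle, then it is a shortcut arc. -/
lemma shortcut_of_extra_arc {V : Type*} (A : V → V → Prop) {n : ℕ} {c : ZMod n → V}
    (hcyc : IsDicycle A c) (hinj : Function.Injective c) (p q : ZMod n)
    (harc : A (c p) (c q)) (hq : q ≠ p + 1) :
    IsShortcutArc A c (c p) (c q) := by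
  have hn : 0 < n := hcyc.1
  haveI : NeZero n := ⟨hn.ne'⟩
  set d : ℕ := (p - q : ZMod n).val with hd
  have hdlt : d < n := ZMod.val_lt _
  set m : ℕ := d + 1 with hm
  have hmpos : 0 < m := Nat.succ_pos d
  haveI : NeZero m := ⟨hmpos.ne'⟩
  have hmle : m ≤ n := hdlt
  have hnotc : (c p, c q) ∉ cycleArcs c := by
    rintro ⟨l, hl⟩
    have h1 : c p = c l := congrArg Prod.fst hl
    have h2 : c q = c (l + 1) := congrArg Prod.snd hl
    have hlp : l = p := (hinj h1).symm
    exact hq (by rw [hinj h2, hlp])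
  set f : ZMod m → ZMod n := fun t => q + ((t.val : ℕ) : ZMod n) with hf
  have hvltn : ∀ t : ZMod m, t.val < n := fun t => lt_of_lt_of_le t.val_lt hmle
  have hfinj : Function.Injective f := by
    intro a b hab
    have h : ((a.val : ℕ) : ZMod n) = ((b.val : ℕ) : ZMod n) := by
      have := hab
      simpa [hf, add_right_inj] using this
    have h2 := congrArg ZMod.val h
    rw [ZMod.val_cast_of_lt (hvltn a), ZMod.val_cast_of_lt (hvltn b)] at h2
    exact ZMod.val_injective m h2
  have hlastval : ((d : ZMod m)).val = d := ZMod.val_cast_of_lt (by omega)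
  have hlast : f (d : ZMod m) = p := by
    show q + _ = p
    rw [hlastval]
    have hdq : ((d : ℕ) : ZMod n) = p - q := by
      rw [hd, ZMod.natCast_val, ZMod.cast_id]
    rw [hdq]; ring
  have hzero : f 0 = q := by
    show q + _ = q
    rw [ZMod.val_zero]; simp
  have hsucc : ∀ t : ZMod m, t.val < d → f (t + 1) = f t + 1 := by
    intro t ht
    have hcast : ((t.val : ℕ) : ZMod m) = t := ZMod.natCast_rightInverse t
    have h1 : (t + 1 : ZMod m) = ((t.val + 1 : ℕ) : ZMod m) := by
      conv_lhs => rw [← hcast]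
      push_cast; ring
    have h2 : (t + 1 : ZMod m).val = t.val + 1 := by
      rw [h1, ZMod.val_cast_of_lt (by omega)]
    show q + _ = q + _ + 1
    rw [h2]; push_cast; ring
  have htop : ∀ t : ZMod m, t.val = d → t = (d : ZMod m) ∧ t + 1 = 0 := by
    intro t ht
    have hcast : ((t.val : ℕ) : ZMod m) = t := ZMod.natCast_rightInverse t
    have h1 : t = (d : ZMod m) := by rw [← hcast, ht]
    refine ⟨h1, ?_⟩
    rw [h1]
    have : ((d : ℕ) : ZMod m) + 1 = ((d + 1 : ℕ) : ZMod m) := by push_cast; ring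
    rw [this, ← hm, ZMod.natCast_self]
  have hcases : ∀ t : ZMod m, t.val < d ∨ t.val = d := by
    intro t
    have := t.val_lt
    omega
  refine ⟨harc, hnotc, m, c ∘ f, ⟨hmpos, ?_⟩, hinj.comp hfinj, ?_, ?_⟩
  · intro t
    rcases hcases t with ht | ht
    · rw [Function.comp_apply, Function.comp_apply, hsucc t ht]
      exact hcyc.2 (f t)
    · obtain ⟨h1, h2⟩ := htop t ht
      rw [Function.comp_apply, Function.comp_apply, h2, hzero, h1, hlast]
      exact harc
  · rintro ⟨x1, x2⟩ ⟨t, ht⟩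
    rcases hcases t with h | h
    · left
      refine ⟨f t, ?_⟩
      rw [ht]
      simp only [Function.comp_apply]
      rw [hsucc t h]
    · right
      obtain ⟨h1, h2⟩ := htop t h
      rw [ht, h2, Function.comp_apply, Function.comp_apply, hzero, h1, hlast]
      rfl
  · intro hEq
    apply hnotc
    rw [← hEq]
    refine ⟨(d : ZMod m), ?_⟩
    have h2 : (d : ZMod m) + 1 = 0 := (htop _ hlastval).2
    rw [Function.comp_apply, Function.comp_apply, h2, hzero, hlast]

/-- The core exchange lemma: if `I` is independent, the `y i` are distinct elements
outside `I`, the `v i` are elements of `I`, each `I - v i + y i` is independent and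
`y i ∈ cl(I - v j)` for `i ≠ j`, then swapping all the `v`'s for the `y`'s preserves
independence. -/
lemma core_exchange {α ι : Type*} (M : Matroid α) (I : Set α) (hI : M.Indep I)
    (v y : ι → α) (hv : ∀ i, v i ∈ I) (hyI : ∀ i, y i ∉ I)
    (hyinj : Function.Injective y)
    (h1 : ∀ i, M.Indep (insert (y i) (I \ {v i})))
    (h2 : ∀ i j, i ≠ j → y i ∈ M.closure (I \ {v j})) (T : Finset ι) :
    M.Indep ((I \ (v '' ↑T)) ∪ y '' ↑T) := by
  classical
  refine Finset.induction_on T (by simpa using hI) ?_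
  intro a T ha ih
  have hIa : I \ {v a} ⊆ M.E := Set.diff_subset.trans hI.subset_ground
  have hyEcl : y a ∈ M.E \ M.closure (I \ {v a}) := by
    have hId : M.Indep (I \ {v a}) := hI.subset Set.diff_subset
    have hnm : y a ∉ I \ {v a} := fun h => hyI a h.1
    exact (hId.insert_indep_iff_of_notMem hnm).mp (h1 a)
  set At : Set α := (I \ v '' ↑(insert a T)) ∪ y '' ↑T with hAt
  have hAtind : M.Indep At := by
    refine ih.subset (Set.union_subset_union_left _ ?_)
    refine Set.diff_subset_diff_right (Set.image_mono ?_)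
    intro x hx
    simp only [Finset.coe_insert, Set.mem_insert_iff]
    exact Or.inr hx
  have hAtcl : At ⊆ M.closure (I \ {v a}) := by
    rintro x (⟨hxI, hxv⟩ | ⟨i, hi, rfl⟩)
    · refine M.subset_closure (I \ {v a}) hIa ⟨hxI, ?_⟩
      simp only [Finset.coe_insert, Set.image_insert_eq] at hxv
      exact fun hx => hxv (by rw [Set.mem_singleton_iff.mp hx]; exact Set.mem_insert _ _)
    · refine h2 i a ?_
      rintro rfl
      exact ha (by exact_mod_cast hi)
  have hya : y a ∉ At := by
    rintro (⟨h, -⟩ | ⟨i, hi, hiy⟩)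
    · exact hyI a h
    · exact ha (by rw [← hyinj hiy] at *; exact_mod_cast hi)
  have hkey : M.Indep (insert (y a) At) :=
    (hAtind.insert_indep_iff_of_notMem hya).mpr
      ⟨hyEcl.1, fun h => hyEcl.2 (Matroid.closure_subset_closure_of_subset_closure hAtcl h)⟩
  have hset : (I \ v '' ↑(insert a T)) ∪ y '' ↑(insert a T) = insert (y a) At := by
    rw [hAt, Finset.coe_insert, Set.image_insert_eq, Set.image_insert_eq, Set.union_insert]
  rw [hset]
  exact hkey

/-- If `C` is a simple directed cycle in the exchange graph of a common independent
set `I` admitting no shortcut arc, then `I ⊖ C` is again a common independent set. -/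
theorem common_indep_of_cycle_no_shortcut {α : Type*} (M₁ M₂ : Matroid α)
    (hE : M₁.E = M₂.E) (I : Set α) (hI₁ : M₁.Indep I) (hI₂ : M₂.Indep I)
    (n : ℕ) (c : ZMod n → α)
    (hcyc : IsDicycle (exchArc M₁ M₂ I) c) (hsimple : Function.Injective c)
    (hnoshort : ∀ u v : α, ¬ IsShortcutArc (exchArc M₁ M₂ I) c u v) :
    M₁.Indep ((I ∪ (Set.range c \ I)) \ (I ∩ Set.range c)) ∧
      M₂.Indep ((I ∪ (Set.range c \ I)) \ (I ∩ Set.range c)) := by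
  classical
  haveI : NeZero n := ⟨hcyc.1.ne'⟩
  have harc := hcyc.2
  have htype1 : ∀ i : ZMod n, c i ∈ I →
      c (i + 1) ∈ M₁.E \ I ∧ c (i + 1) ∈ M₁.closure I ∧ c i ∈ fundC M₁ I (c (i + 1)) := by
    intro i hi
    rcases harc i with h | h
    · exact ⟨h.2.1, h.2.2.1, h.2.2.2⟩
    · exact absurd hi h.1.2
  have htype2 : ∀ i : ZMod n, c i ∉ I →
      c i ∈ M₁.E \ I ∧ c (i + 1) ∈ I ∧ c i ∈ M₂.closure I ∧ c (i + 1) ∈ fundC M₂ I (c i) := by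
    intro i hi
    rcases harc i with h | h
    · exact absurd h.1 hi
    · exact h
  have hsetEq : (I ∪ (Set.range c \ I)) \ (I ∩ Set.range c)
      = (I \ (I ∩ Set.range c)) ∪ (Set.range c \ I) := by
    ext x
    simp only [Set.mem_diff, Set.mem_union, Set.mem_inter_iff]
    tauto
  constructor
  · -- M₁
    set v : {i : ZMod n // c i ∈ I} → α := fun i => c i with hvdef
    set y : {i : ZMod n // c i ∈ I} → α := fun i => c (↑i + 1) with hydef
    have hyinj : Function.Injective y := fun a b h =>
      Subtype.ext (add_right_cancel (hsimple h))
    have key := core_exchange M₁ I hI₁ v y (fun i => i.2)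
      (fun i => (htype1 ↑i i.2).1.2) hyinj
      (fun i => by
        have hne : c (↑i + 1) ≠ c ↑i := fun h' => (htype1 ↑i i.2).1.2 (h' ▸ i.2)
        have h := (mem_fundC_iff.mp (htype1 ↑i i.2).2.2).2
        rwa [← Set.insert_diff_singleton_comm hne] at h)
      (fun i j hij => by
        by_contra hcl
        have hId : M₁.Indep (I \ {c ↑j}) := hI₁.subset Set.diff_subset
        have hnm : c (↑i + 1) ∉ I \ {c ↑j} := fun h => (htype1 ↑i i.2).1.2 h.1
        have hins : M₁.Indep (insert (c (↑i + 1)) (I \ {c ↑j})) :=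
          (hId.insert_indep_iff_of_notMem hnm).mpr ⟨(htype1 ↑i i.2).1.1, hcl⟩
        have hne : c (↑i + 1) ≠ c ↑j := fun h' => (htype1 ↑i i.2).1.2 (h' ▸ j.2)
        have hfund : c ↑j ∈ fundC M₁ I (c (↑i + 1)) :=
          mem_fundC_iff.mpr ⟨Set.mem_insert_of_mem _ j.2,
            by rwa [← Set.insert_diff_singleton_comm hne]⟩
        have harc' : exchArc M₁ M₂ I (c ↑j) (c (↑i + 1)) :=
          Or.inl ⟨j.2, (htype1 ↑i i.2).1, (htype1 ↑i i.2).2.1, hfund⟩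
        refine hnoshort _ _ (shortcut_of_extra_arc _ hcyc hsimple ↑j (↑i + 1) harc' ?_)
        intro h
        exact hij (Subtype.ext (add_right_cancel h)))
      Finset.univ
    have hrv : v '' ↑(Finset.univ : Finset {i : ZMod n // c i ∈ I})
        = I ∩ Set.range c := by
      rw [Finset.coe_univ, Set.image_univ]
      ext x
      constructor
      · rintro ⟨i, rfl⟩; exact ⟨i.2, ↑i, rfl⟩
      · rintro ⟨hxI, l, rfl⟩; exact ⟨⟨l, hxI⟩, rfl⟩
    have hry : y '' ↑(Finset.univ : Finset {i : ZMod n // c i ∈ I})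
        = Set.range c \ I := by
      rw [Finset.coe_univ, Set.image_univ]
      ext x
      constructor
      · rintro ⟨i, rfl⟩; exact ⟨⟨↑i + 1, rfl⟩, (htype1 ↑i i.2).1.2⟩
      · rintro ⟨⟨l, rfl⟩, hxI⟩
        have hl : c (l - 1) ∈ I := by
          by_contra h
          have := (htype2 (l - 1) h).2.1
          rw [sub_add_cancel] at this
          exact hxI this
        refine ⟨⟨l - 1, hl⟩, ?_⟩
        show c (l - 1 + 1) = c l
        rw [sub_add_cancel]
    rw [hsetEq]
    rw [hrv, hry] at key
    exact key
  · -- M₂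
    set v : {i : ZMod n // c i ∉ I} → α := fun i => c (↑i + 1) with hvdef
    set y : {i : ZMod n // c i ∉ I} → α := fun i => c ↑i with hydef
    have hyinj : Function.Injective y := fun a b h => Subtype.ext (hsimple h)
    have key := core_exchange M₂ I hI₂ v y (fun i => (htype2 ↑i i.2).2.1)
      (fun i => i.2) hyinj
      (fun i => by
        have hne : c ↑i ≠ c (↑i + 1) := fun h' => i.2 (h' ▸ (htype2 ↑i i.2).2.1)
        have h := (mem_fundC_iff.mp (htype2 ↑i i.2).2.2.2).2
        rwa [← Set.insert_diff_singleton_comm hne] at h)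
      (fun i j hij => by
        by_contra hcl
        have hId : M₂.Indep (I \ {c (↑j + 1)}) := hI₂.subset Set.diff_subset
        have hnm : c ↑i ∉ I \ {c (↑j + 1)} := fun h => i.2 h.1
        have hE₂ : c ↑i ∈ M₂.E := hE ▸ (htype2 ↑i i.2).1.1
        have hins : M₂.Indep (insert (c ↑i) (I \ {c (↑j + 1)})) :=
          (hId.insert_indep_iff_of_notMem hnm).mpr ⟨hE₂, hcl⟩
        have hne : c ↑i ≠ c (↑j + 1) := fun h' => i.2 (h' ▸ (htype2 ↑j j.2).2.1)
        have hfund : c (↑j + 1) ∈ fundC M₂ I (c ↑i) :=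
          mem_fundC_iff.mpr ⟨Set.mem_insert_of_mem _ (htype2 ↑j j.2).2.1,
            by rwa [← Set.insert_diff_singleton_comm hne]⟩
        have harc' : exchArc M₁ M₂ I (c ↑i) (c (↑j + 1)) :=
          Or.inr ⟨(htype2 ↑i i.2).1, (htype2 ↑j j.2).2.1, (htype2 ↑i i.2).2.2.1, hfund⟩
        refine hnoshort _ _ (shortcut_of_extra_arc _ hcyc hsimple ↑i (↑j + 1) harc' ?_)
        intro h
        exact hij (Subtype.ext (add_right_cancel h)).symm)
      Finset.univ
    have hrv : v '' ↑(Finset.univ : Finset {i : ZMod n // c i ∉ I})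
        = I ∩ Set.range c := by
      rw [Finset.coe_univ, Set.image_univ]
      ext x
      constructor
      · rintro ⟨i, rfl⟩; exact ⟨(htype2 ↑i i.2).2.1, ↑i + 1, rfl⟩
      · rintro ⟨hxI, l, rfl⟩
        have hl : c (l - 1) ∉ I := by
          intro h
          have := (htype1 (l - 1) h).1.2
          rw [sub_add_cancel] at this
          exact this hxI
        refine ⟨⟨l - 1, hl⟩, ?_⟩
        show c (l - 1 + 1) = c l
        rw [sub_add_cancel]
    have hry : y '' ↑(Finset.univ : Finset {i : ZMod n // c i ∉ I})
        = Set.range c \ I := by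
      rw [Finset.coe_univ, Set.image_univ]
      ext x
      constructor
      · rintro ⟨i, rfl⟩; exact ⟨⟨↑i, rfl⟩, i.2⟩
      · rintro ⟨⟨l, rfl⟩, hxI⟩
        exact ⟨⟨l, hxI⟩, rfl⟩
    rw [hsetEq]
    rw [hrv, hry] at key
    exact key
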